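/- Let U ∈ ℝ^{m×n} and v, v' ∈ ℝᵐ be such that the polyhedra 𝒳 = {x : Ux ≤ v} and 𝒳' = {x : Ux ≤ v'} are nonempty, and suppose there is ω > 0 such that for every x on the boundary of either polyhedron the active-row submatrix U_I satisfies U_I U_Iᵀ ⪰ ω²I. Then for every z ∈ ℝⁿ, |d(z, 𝒳') - d(z, 𝒳)| ≤ (1/ω)‖v' - v‖, where d denotes Euclidean distance to a set. -/

import Mathlib

open RealInnerProductSpace Metric

/-- Variational inequality for a metric projection onto a convex set. -/
lemma proj_variational {E : Type*} [NormedAddCommGroup E] [InnerProductSpace ℝ E]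
    {K : Set E} (hK : Convex ℝ K) {x y : E} (hy : y ∈ K)
    (hmin : ∀ w ∈ K, dist x y ≤ dist x w) :
    ∀ w ∈ K, ⟪x - y, w - y⟫ ≤ 0 := by
  intro w hw
  by_contra hcon
  push_neg at hcon
  have hne : w ≠ y := by
    rintro rfl
    simp at hcon
  have hwy : 0 < ‖w - y‖ ^ 2 := by
    have : w - y ≠ 0 := sub_ne_zero.mpr hne
    exact pow_pos (norm_pos_iff.mpr this) 2
  set c : ℝ := ⟪x - y, w - y⟫ with hc
  set t : ℝ := min 1 (c / ‖w - y‖ ^ 2) with htdef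
  have ht0 : 0 < t := lt_min one_pos (div_pos hcon hwy)
  have ht1 : t ≤ 1 := min_le_left _ _
  have htc : t * ‖w - y‖ ^ 2 ≤ c := by
    have h5 : t ≤ c / ‖w - y‖ ^ 2 := min_le_right _ _
    calc t * ‖w - y‖ ^ 2 ≤ (c / ‖w - y‖ ^ 2) * ‖w - y‖ ^ 2 :=
          mul_le_mul_of_nonneg_right h5 (le_of_lt hwy)
      _ = c := div_mul_cancel₀ _ (ne_of_gt hwy)
  have hzK : y + t • (w - y) ∈ K := by
    have := hK hy hw (by linarith : (0:ℝ) ≤ 1 - t) (le_of_lt ht0) (by ring)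
    convert this using 1
    rw [smul_sub, sub_smul, one_smul]
    abel
  have hd := hmin _ hzK
  rw [dist_eq_norm, dist_eq_norm] at hd
  have hsq : ‖x - y‖ ^ 2 ≤ ‖x - (y + t • (w - y))‖ ^ 2 := by
    nlinarith [norm_nonneg (x - (y + t • (w - y))), norm_nonneg (x - y)]
  have hexp : ‖x - (y + t • (w - y))‖ ^ 2
      = ‖x - y‖ ^ 2 - 2 * (t * c) + t ^ 2 * ‖w - y‖ ^ 2 := by
    have heq : x - (y + t • (w - y)) = (x - y) - t • (w - y) := by abel
    rw [heq, norm_sub_sq_real, real_inner_smul_right, norm_smul, Real.norm_eq_abs,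
      mul_pow, sq_abs, hc]
  rw [hexp] at hsq
  have h4 : t * (t * ‖w - y‖ ^ 2) ≤ t * c :=
    mul_le_mul_of_nonneg_left htc (le_of_lt ht0)
  nlinarith [mul_pos ht0 hcon]

lemma key_hoffman {m n : ℕ} (u : Fin m → EuclideanSpace ℝ (Fin n)) (v v' : Fin m → ℝ)
    (ω : ℝ) (hω : 0 < ω)
    (K : Set (EuclideanSpace ℝ (Fin n))) (hK : K = {x | ∀ i, ⟪u i, x⟫ ≤ v' i})
    (hKne : K.Nonempty)
    (hLICQ : ∀ y ∈ K, ∀ μ : Fin m → ℝ, (∀ i, μ i ≠ 0 → ⟪u i, y⟫ = v' i) →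
      ω ^ 2 * (∑ i, μ i ^ 2) ≤ ‖∑ i, μ i • u i‖ ^ 2)
    (x : EuclideanSpace ℝ (Fin n)) (hx : ∀ i, ⟪u i, x⟫ ≤ v i) :
    ∃ y ∈ K, dist x y ≤ (1 / ω) * Real.sqrt (∑ i, (v i - v' i) ^ 2) := by
  classical
  -- K is convex and closed
  have hKconv : Convex ℝ K := by
    subst hK
    intro p hp q hq a b ha hb hab
    intro i
    have h1 := hp i
    have h2 := hq i
    simp only [inner_add_right, real_inner_smul_right]
    have h3 : a * v' i + b * v' i = v' i := by rw [← add_mul, hab, one_mul]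
    have h4 := mul_le_mul_of_nonneg_left h1 ha
    have h5 := mul_le_mul_of_nonneg_left h2 hb
    linarith
  have hKcl : IsClosed K := by
    subst hK
    have : {x : EuclideanSpace ℝ (Fin n) | ∀ i, ⟪u i, x⟫ ≤ v' i}
        = ⋂ i, {x | ⟪u i, x⟫ ≤ v' i} := by ext w; simp
    rw [this]
    exact isClosed_iInter fun i =>
      isClosed_le (Continuous.inner continuous_const continuous_id) continuous_const
  obtain ⟨y, hyK, hyd⟩ := hKcl.exists_infDist_eq_dist hKne x
  have hmin : ∀ w ∈ K, dist x y ≤ dist x w := fun w hw =>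
    hyd ▸ infDist_le_dist_of_mem hw
  have hvar := proj_variational hKconv hyK hmin
  set p : EuclideanSpace ℝ (Fin n) := x - y with hp
  have hyK' : ∀ i, ⟪u i, y⟫ ≤ v' i := by rw [hK] at hyK; exact hyK
  -- the cone generated by rows active at y
  set C : Set (EuclideanSpace ℝ (Fin n)) :=
    {s | ∃ μ : Fin m → ℝ, (∀ i, 0 ≤ μ i) ∧ (∀ i, μ i ≠ 0 → ⟪u i, y⟫ = v' i)
      ∧ s = ∑ i, μ i • u i} with hC
  have h0C : (0 : EuclideanSpace ℝ (Fin n)) ∈ C :=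
    ⟨0, fun i => le_refl 0, fun i hi => absurd rfl hi, by simp⟩
  have hCconv : Convex ℝ C := by
    rintro s ⟨μ, hμ0, hμa, rfl⟩ s' ⟨ν, hν0, hνa, rfl⟩ a b ha hb hab
    refine ⟨fun i => a * μ i + b * ν i,
      fun i => add_nonneg (mul_nonneg ha (hμ0 i)) (mul_nonneg hb (hν0 i)),
      fun i hi => ?_, ?_⟩
    · by_cases hμi : μ i = 0
      · have hb' : b * ν i ≠ 0 := by simpa [hμi] using hi
        exact hνa i (right_ne_zero_of_mul hb')
      · exact hμa i hμi
    · rw [Finset.smul_sum, Finset.smul_sum, ← Finset.sum_add_distrib]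
      congr 1
      ext i
      rw [add_smul, smul_smul, smul_smul]
  -- p lies in the closure of the cone C
  have hpC : p ∈ closure C := by
    by_contra hpc
    have hCCne : (closure C).Nonempty := ⟨0, subset_closure h0C⟩
    obtain ⟨q, hqC, hqd⟩ := isClosed_closure.exists_infDist_eq_dist hCCne p
    have hminq : ∀ s ∈ closure C, dist p q ≤ dist p s := fun s hs =>
      hqd ▸ infDist_le_dist_of_mem hs
    have hvarq := proj_variational hCconv.closure hqC hminq
    set d : EuclideanSpace ℝ (Fin n) := p - q with hd
    have hdne : d ≠ 0 := by
      rw [hd, sub_ne_zero]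
      rintro rfl
      exact hpc hqC
    -- 2 • q ∈ closure C
    have h2q : (2 : ℝ) • q ∈ closure C := by
      have himg : (fun s : EuclideanSpace ℝ (Fin n) => (2:ℝ) • s) '' C ⊆ C := by
        rintro - ⟨s, ⟨μ, hμ0, hμa, rfl⟩, rfl⟩
        refine ⟨fun i => 2 * μ i, fun i => mul_nonneg (by norm_num) (hμ0 i),
          fun i hi => hμa i (right_ne_zero_of_mul hi), ?_⟩
        show (2:ℝ) • ∑ i : Fin m, μ i • u i = _
        rw [Finset.smul_sum]
        exact Finset.sum_congr rfl fun i _ => (smul_smul _ _ _)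
      have hmap := image_closure_subset_closure_image
        (f := fun s : EuclideanSpace ℝ (Fin n) => (2:ℝ) • s) (s := C)
        (continuous_const_smul 2)
      exact closure_mono himg (hmap ⟨q, hqC, rfl⟩)
    have hq0 : ⟪d, q⟫ = 0 := by
      have ha := hvarq _ (subset_closure h0C)
      have hb := hvarq _ h2q
      rw [zero_sub, inner_neg_right] at ha
      have hb' : ⟪d, q⟫ ≤ 0 := by
        have : (2:ℝ) • q - q = q := by
          rw [two_smul]; abel
        rwa [this] at hb
      linarith
    -- rows active at y have nonpositive inner product with d
    have hui : ∀ i, ⟪u i, y⟫ = v' i → ⟪u i, d⟫ ≤ 0 := by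
      intro i hi
      have huiC : u i ∈ C := by
        refine ⟨fun k => if k = i then 1 else 0, fun k => by positivity,
          fun k hk => by
            simp only [ne_eq, ite_eq_right_iff, not_forall] at hk
            obtain ⟨rfl, -⟩ := hk
            exact hi, ?_⟩
        simp [Finset.sum_ite_eq']
      have := hvarq _ (subset_closure huiC)
      rw [inner_sub_right, hq0] at this
      rw [real_inner_comm]
      linarith
    -- small motion along d stays in K
    have hev : ∀ᶠ t in nhdsWithin (0:ℝ) (Set.Ioi 0), y + t • d ∈ K := by
      rw [hK]
      simp only [Set.mem_setOf_eq]
      rw [Filter.eventually_all]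
      intro i
      by_cases hi : ⟪u i, y⟫ = v' i
      · filter_upwards [self_mem_nhdsWithin] with t ht
        have ht0 : (0:ℝ) < t := ht
        rw [inner_add_right, real_inner_smul_right, hi]
        nlinarith [hui i hi]
      · have hlt : ⟪u i, y⟫ < v' i := lt_of_le_of_ne (hyK' i) hi
        have hcont : ContinuousAt (fun t : ℝ => ⟪u i, y + t • d⟫) 0 := by
          apply Continuous.continuousAt
          exact Continuous.inner continuous_const
            (continuous_const.add (continuous_id.smul continuous_const))
        have hg : ContinuousAt (fun _ : ℝ => v' i) 0 := continuousAt_const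
        have h0 : (fun t : ℝ => ⟪u i, y + t • d⟫) 0 < v' i := by simpa using hlt
        have := hcont.eventually_lt hg h0
        exact (this.filter_mono nhdsWithin_le_nhds).mono fun t ht => le_of_lt ht
    have hev' := hev.and self_mem_nhdsWithin
    haveI := nhdsGT_neBot (0:ℝ)
    obtain ⟨t, htK, ht0⟩ := hev'.exists
    have ht0 : (0:ℝ) < t := ht0
    have hvd := hvar _ htK
    have hsimp : y + t • d - y = t • d := by abel
    rw [hsimp, real_inner_smul_right] at hvd
    have hpd : ⟪p, d⟫ ≤ 0 := by
      by_contra hh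
      push_neg at hh
      nlinarith
    have hpd2 : ⟪p, d⟫ = ‖d‖ ^ 2 := by
      have hpq : p = d + q := by rw [hd]; abel
      rw [hpq, inner_add_left, real_inner_self_eq_norm_sq, real_inner_comm d q, hq0,
        add_zero]
    have hdpos : 0 < ‖d‖ ^ 2 := by
      have := norm_pos_iff.mpr hdne
      positivity
    rw [hpd2] at hpd
    linarith
  -- final estimate
  set D : ℝ := Real.sqrt (∑ i, (v i - v' i) ^ 2) with hD
  have hD0 : 0 ≤ D := Real.sqrt_nonneg _
  have hε : ∀ ε : ℝ, 0 < ε →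
      ‖p‖ ^ 2 ≤ 1 / ω * D * ‖p‖ + ε * (1 / ω * D + ‖p‖) := by
    intro ε hεpos
    obtain ⟨s, ⟨μ, hμ0, hμa, rfl⟩, hds⟩ := Metric.mem_closure_iff.mp hpC ε hεpos
    set s : EuclideanSpace ℝ (Fin n) := ∑ i, μ i • u i with hs
    rw [dist_eq_norm] at hds
    -- ⟪s, p⟫ ≤ ∑ μ i * (v i - v' i)
    have hsp : ⟪s, p⟫ ≤ ∑ i, μ i * (v i - v' i) := by
      rw [hs, sum_inner]
      refine Finset.sum_le_sum fun i _ => ?_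
      rw [real_inner_smul_left]
      by_cases hμi : μ i = 0
      · simp [hμi]
      · have hact := hμa i hμi
        have : ⟪u i, p⟫ ≤ v i - v' i := by
          rw [hp, inner_sub_right, hact]
          have := hx i
          linarith
        exact mul_le_mul_of_nonneg_left this (hμ0 i)
    -- Cauchy–Schwarz
    have hCS : ∑ i, μ i * (v i - v' i) ≤ Real.sqrt (∑ i, μ i ^ 2) * D := by
      set a : EuclideanSpace ℝ (Fin m) := WithLp.toLp 2 (fun i => μ i) with ha
      set b : EuclideanSpace ℝ (Fin m) := WithLp.toLp 2 (fun i => v i - v' i) with hb2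
      have h := real_inner_le_norm a b
      have h1 : ⟪a, b⟫ = ∑ i, μ i * (v i - v' i) := by
        rw [PiLp.inner_apply]
        exact Finset.sum_congr rfl fun i _ => by simp [ha, hb2, RCLike.inner_apply, mul_comm]
      have h2 : ‖a‖ = Real.sqrt (∑ i, μ i ^ 2) := by
        rw [EuclideanSpace.norm_eq]
        congr 1
        exact Finset.sum_congr rfl fun i _ => by
          simp [ha, Real.norm_eq_abs, sq_abs]
      have h3 : ‖b‖ = D := by
        rw [EuclideanSpace.norm_eq, hD]
        congr 1
        exact Finset.sum_congr rfl fun i _ => by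
          simp [hb2, Real.norm_eq_abs, sq_abs]
      rw [h1, h2, h3] at h
      exact h
    -- LICQ bound
    have hLI : Real.sqrt (∑ i, μ i ^ 2) ≤ ‖s‖ / ω := by
      have h := hLICQ y hyK μ hμa
      have h1 : ∑ i, μ i ^ 2 ≤ (‖s‖ / ω) ^ 2 := by
        rw [div_pow, le_div_iff₀ (by positivity)]
        nlinarith [h]
      calc Real.sqrt (∑ i, μ i ^ 2) ≤ Real.sqrt ((‖s‖ / ω) ^ 2) :=
            Real.sqrt_le_sqrt h1
        _ = ‖s‖ / ω := Real.sqrt_sq (by positivity)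
    have hsn : ‖s‖ ≤ ‖p‖ + ε := by
      have h1 := norm_sub_norm_le s p
      have h2 := norm_sub_rev p s
      linarith
    have hps : ⟪p - s, p⟫ ≤ ε * ‖p‖ := by
      calc ⟪p - s, p⟫ ≤ ‖p - s‖ * ‖p‖ := real_inner_le_norm _ _
        _ ≤ ε * ‖p‖ := mul_le_mul_of_nonneg_right (le_of_lt hds) (norm_nonneg _)
    have hsplit : ‖p‖ ^ 2 = ⟪p - s, p⟫ + ⟪s, p⟫ := by
      rw [← inner_add_left, sub_add_cancel, real_inner_self_eq_norm_sq]
    have hchain : ⟪s, p⟫ ≤ (‖p‖ + ε) / ω * D := by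
      have h1 : Real.sqrt (∑ i, μ i ^ 2) * D ≤ ‖s‖ / ω * D :=
        mul_le_mul_of_nonneg_right hLI hD0
      have h2 : ‖s‖ / ω * D ≤ (‖p‖ + ε) / ω * D := by
        apply mul_le_mul_of_nonneg_right _ hD0
        exact (div_le_div_iff_of_pos_right hω).mpr hsn
      linarith
    have hfin : (‖p‖ + ε) / ω * D = 1 / ω * D * ‖p‖ + ε * (1 / ω * D) := by
      field_simp
    nlinarith
  have hnp2 : ‖p‖ ^ 2 ≤ 1 / ω * D * ‖p‖ := by
    refine le_of_forall_pos_le_add fun δ hδ => ?_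
    set c : ℝ := 1 / ω * D + ‖p‖ with hc
    have hc0 : 0 ≤ c := by positivity
    have := hε (δ / (c + 1)) (by positivity)
    have hle : δ / (c + 1) * c ≤ δ := by
      rw [div_mul_eq_mul_div, div_le_iff₀ (by linarith)]
      nlinarith
    linarith
  have hnp : ‖p‖ ≤ 1 / ω * D := by
    rcases eq_or_lt_of_le (norm_nonneg p) with h | h
    · rw [← h]
      positivity
    · nlinarith
  exact ⟨y, hyK, by rw [dist_eq_norm]; exact hnp⟩


lemma euclid_sum_apply {m n : ℕ} (μ : Fin m → ℝ) (u : Fin m → EuclideanSpace ℝ (Fin n))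
    (j : Fin n) : (∑ i, μ i • u i) j = ∑ i, μ i * u i j := by
  classical
  induction (Finset.univ : Finset (Fin m)) using Finset.induction with
  | empty => simp
  | @insert a s h ih =>
    rw [Finset.sum_insert h, Finset.sum_insert h, ← ih]
    simp [PiLp.add_apply, PiLp.smul_apply]

lemma euclid_norm_sq {n : ℕ} (w : EuclideanSpace ℝ (Fin n)) : ‖w‖ ^ 2 = ∑ j, w j ^ 2 := by
  rw [EuclideanSpace.norm_eq, Real.sq_sqrt (by positivity)]
  exact Finset.sum_congr rfl fun j _ => by rw [Real.norm_eq_abs, sq_abs]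

/-- Lipschitz dependence of a polyhedron on its right-hand side: if
`𝒳 = {x : Ux ≤ v}` and `𝒳' = {x : Ux ≤ v'}` are nonempty and the active rows satisfy
the uniform full-rank condition `U_I U_Iᵀ ⪰ ω²I`, then for every `z`,
`|d(z,𝒳') - d(z,𝒳)| ≤ (1/ω)‖v' - v‖`. -/
theorem polyhedron_rhs_distance_lipschitz
    {m n : ℕ} (U : Matrix (Fin m) (Fin n) ℝ) (v v' : Fin m → ℝ) (ω : ℝ) (hω : 0 < ω)
    (𝒳 𝒳' : Set (EuclideanSpace ℝ (Fin n)))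
    (h𝒳 : 𝒳 = {x | ∀ i, (∑ j, U i j * x j) ≤ v i})
    (h𝒳' : 𝒳' = {x | ∀ i, (∑ j, U i j * x j) ≤ v' i})
    (hne : 𝒳.Nonempty) (hne' : 𝒳'.Nonempty)
    (hLICQ : ∀ x ∈ 𝒳 ∪ 𝒳', ∀ I : Finset (Fin m),
      (∀ i ∈ I, (∑ j, U i j * x j) = v i ∨ (∑ j, U i j * x j) = v' i) →
      ∀ w : Fin m → ℝ, (∀ i ∉ I, w i = 0) →
        ω ^ 2 * (∑ i, (w i) ^ 2) ≤ ∑ j, (∑ i, w i * U i j) ^ 2) :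
    ∀ z : EuclideanSpace ℝ (Fin n),
      |Metric.infDist z 𝒳' - Metric.infDist z 𝒳| ≤
        (1 / ω) * Real.sqrt (∑ i, (v' i - v i) ^ 2) := by
  classical
  set u : Fin m → EuclideanSpace ℝ (Fin n) := fun i => WithLp.toLp 2 (fun j => U i j) with hu
  have hinner : ∀ (i : Fin m) (x : EuclideanSpace ℝ (Fin n)),
      ⟪u i, x⟫ = ∑ j, U i j * x j := by
    intro i x
    rw [PiLp.inner_apply]
    exact Finset.sum_congr rfl fun j _ => by simp [hu, RCLike.inner_apply, mul_comm]
  have hX : 𝒳 = {x | ∀ i, ⟪u i, x⟫ ≤ v i} := by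
    rw [h𝒳]; ext w; simp only [Set.mem_setOf_eq, hinner]
  have hX' : 𝒳' = {x | ∀ i, ⟪u i, x⟫ ≤ v' i} := by
    rw [h𝒳']; ext w; simp only [Set.mem_setOf_eq, hinner]
  have hnorm : ∀ μ : Fin m → ℝ, ∑ j, (∑ i, μ i * U i j) ^ 2 = ‖∑ i, μ i • u i‖ ^ 2 := by
    intro μ
    rw [euclid_norm_sq]
    exact Finset.sum_congr rfl fun j _ => by rw [euclid_sum_apply]
  have hL' : ∀ y ∈ 𝒳', ∀ μ : Fin m → ℝ, (∀ i, μ i ≠ 0 → ⟪u i, y⟫ = v' i) →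
      ω ^ 2 * (∑ i, μ i ^ 2) ≤ ‖∑ i, μ i • u i‖ ^ 2 := by
    intro y hy μ hact
    rw [← hnorm μ]
    refine hLICQ y (Or.inr hy) (Finset.univ.filter fun i => μ i ≠ 0)
      (fun i hi => Or.inr ?_) μ (fun i hi => ?_)
    · rw [← hinner i y]
      exact hact i (Finset.mem_filter.mp hi).2
    · by_contra hne0
      exact hi (Finset.mem_filter.mpr ⟨Finset.mem_univ i, hne0⟩)
  have hL : ∀ y ∈ 𝒳, ∀ μ : Fin m → ℝ, (∀ i, μ i ≠ 0 → ⟪u i, y⟫ = v i) →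
      ω ^ 2 * (∑ i, μ i ^ 2) ≤ ‖∑ i, μ i • u i‖ ^ 2 := by
    intro y hy μ hact
    rw [← hnorm μ]
    refine hLICQ y (Or.inl hy) (Finset.univ.filter fun i => μ i ≠ 0)
      (fun i hi => Or.inl ?_) μ (fun i hi => ?_)
    · rw [← hinner i y]
      exact hact i (Finset.mem_filter.mp hi).2
    · by_contra hne0
      exact hi (Finset.mem_filter.mpr ⟨Finset.mem_univ i, hne0⟩)
  set B : ℝ := (1 / ω) * Real.sqrt (∑ i, (v' i - v i) ^ 2) with hB
  have h1 : ∀ x ∈ 𝒳, ∃ y ∈ 𝒳', dist x y ≤ B := by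
    intro x hx
    obtain ⟨y, hy, hd⟩ := key_hoffman u v v' ω hω 𝒳' hX' hne' hL' x
      (fun i => by rw [hinner]; exact (h𝒳 ▸ hx) i)
    refine ⟨y, hy, ?_⟩
    have hsym : Real.sqrt (∑ i, (v i - v' i) ^ 2)
        = Real.sqrt (∑ i, (v' i - v i) ^ 2) := by
      congr 1
      exact Finset.sum_congr rfl fun i _ => by ring
    rw [hB, ← hsym]
    exact hd
  have h2 : ∀ y ∈ 𝒳', ∃ x ∈ 𝒳, dist y x ≤ B := by
    intro y hy
    obtain ⟨x, hx, hd⟩ := key_hoffman u v' v ω hω 𝒳 hX hne hL y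
      (fun i => by rw [hinner]; exact (h𝒳' ▸ hy) i)
    exact ⟨x, hx, by rw [hB]; exact hd⟩
  intro z
  rw [abs_sub_le_iff]
  have step : ∀ (S T : Set (EuclideanSpace ℝ (Fin n))), T.Nonempty →
      (∀ x ∈ T, ∃ y ∈ S, dist x y ≤ B) →
      Metric.infDist z S - Metric.infDist z T ≤ B := by
    intro S T hTne hST
    by_contra hcon
    push_neg at hcon
    have hlt : Metric.infDist z T < Metric.infDist z S - B := by linarith
    obtain ⟨x, hxT, hdx⟩ := (Metric.infDist_lt_iff hTne).mp hlt
    obtain ⟨y, hyS, hdy⟩ := hST x hxT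
    have ha : Metric.infDist z S ≤ dist z y := Metric.infDist_le_dist_of_mem hyS
    have hb : dist z y ≤ dist z x + dist x y := dist_triangle _ _ _
    linarith
  exact ⟨step 𝒳' 𝒳 hne h1, step 𝒳 𝒳' hne' h2⟩
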